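/- Let p be a prime and let G = (ℤ/pℤ)² be the free abelian group on two generators x, y written multiplicatively. Then the element x + y − 1 is a unit (invertible element) of the group ring (ℤ/pℤ)[G]; indeed (x + y − 1)·Σ_{i=0}^{p−1}(x+y)^i = 1. -/

import Mathlib

/-- For a prime `p` and `G = (ℤ/pℤ)²` (written multiplicatively, with generators `x, y`),
the element `x + y − 1` of the group ring `(ℤ/pℤ)[G]` is a unit; indeed
`(x + y − 1) · Σ_{i<p} (x+y)ⁱ = 1`. -/
theorem x_add_y_sub_one_isUnit (p : ℕ) (hp : p.Prime) :
    IsUnit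
      (MonoidAlgebra.of (ZMod p) (Multiplicative (ZMod p × ZMod p))
          (Multiplicative.ofAdd ((1 : ZMod p), (0 : ZMod p))) +
        MonoidAlgebra.of (ZMod p) (Multiplicative (ZMod p × ZMod p))
          (Multiplicative.ofAdd ((0 : ZMod p), (1 : ZMod p))) - 1) ∧
    (MonoidAlgebra.of (ZMod p) (Multiplicative (ZMod p × ZMod p))
          (Multiplicative.ofAdd ((1 : ZMod p), (0 : ZMod p))) +
        MonoidAlgebra.of (ZMod p) (Multiplicative (ZMod p × ZMod p))
          (Multiplicative.ofAdd ((0 : ZMod p), (1 : ZMod p))) - 1) *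
      ∑ i ∈ Finset.range p,
        (MonoidAlgebra.of (ZMod p) (Multiplicative (ZMod p × ZMod p))
            (Multiplicative.ofAdd ((1 : ZMod p), (0 : ZMod p))) +
          MonoidAlgebra.of (ZMod p) (Multiplicative (ZMod p × ZMod p))
            (Multiplicative.ofAdd ((0 : ZMod p), (1 : ZMod p)))) ^ i = 1 := by
  haveI : Fact p.Prime := ⟨hp⟩
  set x := MonoidAlgebra.of (ZMod p) (Multiplicative (ZMod p × ZMod p))
      (Multiplicative.ofAdd ((1 : ZMod p), (0 : ZMod p))) with hx
  set y := MonoidAlgebra.of (ZMod p) (Multiplicative (ZMod p × ZMod p))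
      (Multiplicative.ofAdd ((0 : ZMod p), (1 : ZMod p))) with hy
  have hxp : x ^ p = 1 := by
    rw [hx, ← map_pow, ← ofAdd_nsmul]
    norm_num [ZMod.natCast_self]
    exact MonoidAlgebra.one_def.symm
  have hyp : y ^ p = 1 := by
    rw [hy, ← map_pow, ← ofAdd_nsmul]
    norm_num [ZMod.natCast_self]
    exact MonoidAlgebra.one_def.symm
  have hinj : Function.Injective
      (algebraMap (ZMod p) (MonoidAlgebra (ZMod p) (Multiplicative (ZMod p × ZMod p)))) := by
    rw [MonoidAlgebra.coe_algebraMap]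
    exact MonoidAlgebra.single_right_injective (m := 1)
  haveI : CharP (MonoidAlgebra (ZMod p) (Multiplicative (ZMod p × ZMod p))) p :=
    charP_of_injective_algebraMap hinj p
  have hz : (x + y) ^ p = 2 := by
    rw [add_pow_char, hxp, hyp]; norm_num
  have key : (x + y - 1) * ∑ i ∈ Finset.range p, (x + y) ^ i = 1 := by
    rw [mul_comm, geom_sum_mul, hz]
    norm_num
  exact ⟨IsUnit.of_mul_eq_one _ key, key⟩
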